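/- Let X be a Lefschetz complex over a ring R with unity, let 𝒱 be a multivector field on X with X invariant, and let 𝓜 = {M_r : r ∈ ℙ} be a Morse decomposition of X. If I ⊆ ℙ is convex (with respect to an admissible order ≤ on ℙ), then, writing I^≤ := {r : ∃ s ∈ I, r ≤ s}, I^< := I^≤ ∖ I, and N(J) := X ∖ Inv(X ∖ M(J)) for a lower set J, the pair (N(I^≤), N(I^<)) is an index pair for the Morse set M(I). -/

import Mathlib

open scoped Classical

namespace CMVF

variable {R : Type*} [Ring R] {X : Type*} [Fintype X]

/-- A Lefschetz complex over `R` with cells `X`. -/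
structure Lefschetz (R : Type*) [Ring R] (X : Type*) [Fintype X] where
  dim : X → ℕ
  κ : X → X → R
  dim_facet : ∀ x y, κ x y ≠ 0 → dim x = dim y + 1
  κ_sq : ∀ x z, (∑ y : X, κ x y * κ y z) = 0

namespace Lefschetz

variable (L : Lefschetz R X)

/-- The face order `y ≤κ x` : the partial order generated by the facet relation. -/
def le (y x : X) : Prop := Relation.ReflTransGen (fun a b => L.κ b a ≠ 0) y x

/-- Closure of a set of cells: all faces of cells of `A`. -/
def cls (A : Set X) : Set X := {z | ∃ a ∈ A, L.le z a}

/-- Closure of a single cell. -/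
def clPt (x : X) : Set X := L.cls {x}

/-- The minimal open set containing `x`. -/
def opn (x : X) : Set X := {z | L.le x z}

/-- `A` is closed. -/
def Closed (A : Set X) : Prop := L.cls A = A

/-- The mouth of `A`. -/
def mo (A : Set X) : Set X := L.cls A \ A

/-- `A` is proper: its mouth is closed. -/
def Proper (A : Set X) : Prop := L.Closed (L.mo A)

/-- Relative closure within an ambient subcomplex `W`. -/
def clsIn (W A : Set X) : Set X := L.cls A ∩ W

/-- Relative mouth within an ambient subcomplex `W`. -/
def moIn (W A : Set X) : Set X := L.clsIn W A \ A

/-- The boundary operator of the subcomplex determined by `A`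
(`∂ x = ∑ y ∈ A, κ x y • y` for `x ∈ A`). -/
noncomputable def bd (A : Set X) : (X → R) →ₗ[R] (X → R) where
  toFun f := fun y => if y ∈ A then ∑ x : X, (if x ∈ A then f x * L.κ x y else 0) else 0
  map_add' f g := by
    funext y
    by_cases hy : y ∈ A
    · simp only [hy, if_true, Pi.add_apply]
      rw [← Finset.sum_add_distrib]
      refine Finset.sum_congr rfl fun x _ => ?_
      by_cases hx : x ∈ A <;> simp [hx, add_mul]
    · simp [hy]
  map_smul' r f := by
    funext y
    by_cases hy : y ∈ A
    · simp only [hy, if_true, Pi.smul_apply, smul_eq_mul, RingHom.id_apply]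
      rw [Finset.mul_sum]
      refine Finset.sum_congr rfl fun x _ => ?_
      by_cases hx : x ∈ A <;> simp [hx, mul_assoc]
    · simp [hy]

/-- The `n`-chains of the subcomplex determined by `A`. -/
noncomputable def chainGroup (A : Set X) (n : ℕ) : Submodule R (X → R) :=
  Submodule.span R {f | ∃ x ∈ A, L.dim x = n ∧ f = Pi.single x 1}

/-- The `n`-cycles of the subcomplex determined by `A`. -/
noncomputable def cycles (A : Set X) (n : ℕ) : Submodule R (X → R) :=
  L.chainGroup A n ⊓ LinearMap.ker (L.bd A)

/-- The `n`-boundaries of the subcomplex determined by `A`. -/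
noncomputable def boundaries (A : Set X) (n : ℕ) : Submodule R (X → R) :=
  (L.chainGroup A (n + 1)).map (L.bd A)

/-- The Lefschetz homology `H^κ_n(A)` of the subcomplex determined by `A`. -/
noncomputable def homology (A : Set X) (n : ℕ) : Type _ :=
  (L.cycles A n) ⧸ ((L.boundaries A n).comap (L.cycles A n).subtype)

noncomputable instance homologyAddCommGroup (A : Set X) (n : ℕ) :
    AddCommGroup (L.homology A n) :=
  inferInstanceAs (AddCommGroup
    ((L.cycles A n) ⧸ ((L.boundaries A n).comap (L.cycles A n).subtype)))

noncomputable instance homologyModule (A : Set X) (n : ℕ) :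
    Module R (L.homology A n) :=
  inferInstanceAs (Module R
    ((L.cycles A n) ⧸ ((L.boundaries A n).comap (L.cycles A n).subtype)))

/-- `A` is a zero space: its Lefschetz homology vanishes. -/
def HomologyZero (A : Set X) : Prop := ∀ n, Subsingleton (L.homology A n)

/-- The Poincaré polynomial `p_A(t) = ∑ rank H^κ_n(A) tⁿ`. -/
noncomputable def poincare (A : Set X) : Polynomial ℕ :=
  ∑ n ∈ Finset.image L.dim Finset.univ,
    Polynomial.C (Module.finrank R (L.homology A n)) * Polynomial.X ^ n

/-- `V` is a multivector: proper, with a unique maximal element. -/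
def IsMV (V : Set X) : Prop :=
  L.Proper V ∧ ∃! m, m ∈ V ∧ ∀ x ∈ V, L.le x m

/-- A regular multivector: one with vanishing Lefschetz homology. -/
def Regular (V : Set X) : Prop := L.HomologyZero V

end Lefschetz

/-- A combinatorial multivector field on a Lefschetz complex: a partition into multivectors. -/
structure MVField {R : Type*} [Ring R] {X : Type*} [Fintype X] (L : Lefschetz R X) where
  mvs : Set (Set X)
  isMV : ∀ V ∈ mvs, L.IsMV V
  cover : ∀ x : X, ∃! V, V ∈ mvs ∧ x ∈ V

namespace MVField

variable {L : Lefschetz R X} (F : MVField L)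

/-- `[x]` : the multivector containing `x`. -/
noncomputable def mclass (x : X) : Set X := (F.cover x).exists.choose

lemma mclass_spec (x : X) : F.mclass x ∈ F.mvs ∧ x ∈ F.mclass x :=
  (F.cover x).exists.choose_spec

/-- `x★` : the dominant cell of the multivector containing `x`. -/
noncomputable def star (x : X) : X :=
  ((F.isMV _ (F.mclass_spec x).1).2).exists.choose

/-- `[x]°` : the regular part of the multivector of `x`. -/
noncomputable def regPart (x : X) : Set X :=
  if L.Regular (F.mclass x) then F.mclass x else F.mclass x \ {F.star x}

/-- The multivalued map `Π_𝒱`. -/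
noncomputable def Pi (x : X) : Set X :=
  if x = F.star x then L.clPt x \ F.regPart x else {F.star x}

/-- The multivalued map of the multivector field restricted to the subcomplex `W`. -/
noncomputable def PiIn (W : Set X) (x : X) : Set X := F.Pi x ∩ W

/-- `φ : ℤ → X` is a full solution of the multivector field restricted to `W`. -/
def IsSolIn (W : Set X) (φ : ℤ → X) : Prop := ∀ i, φ (i + 1) ∈ F.PiIn W (φ i)

/-- There is a full solution (of the field restricted to `W`) through `x` with values in `A`. -/
def FullSolThroughIn (W : Set X) (x : X) (A : Set X) : Prop :=
  ∃ φ : ℤ → X, F.IsSolIn W φ ∧ (∃ i, φ i = x) ∧ ∀ i, φ i ∈ A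

/-- `A` is `𝒱`-compatible. -/
def Compat (A : Set X) : Prop := ∀ x ∈ A, F.mclass x ⊆ A

/-- `[A]⁻` : the maximal `𝒱`-compatible subset of `A`. -/
def lowerC (A : Set X) : Set X := {x ∈ A | F.mclass x ⊆ A}

/-- `[A]⁺` : the minimal `𝒱`-compatible superset of `A`. -/
def upperC (A : Set X) : Set X := ⋃ x ∈ A, F.mclass x

/-- `Inv A`, the invariant part of `A`, computed in the subcomplex `W`. -/
def InvPartIn (W A : Set X) : Set X :=
  {x ∈ A | F.FullSolThroughIn W (F.star x) (F.lowerC A)}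

/-- `A` is invariant (within the subcomplex `W`). -/
def InvariantIn (W A : Set X) : Prop := F.InvPartIn W A = A

/-- `φ` is a path (solution) on the integer interval `[a,b]`, within the subcomplex `W`. -/
def IsPathOnIn (W : Set X) (a b : ℤ) (φ : ℤ → X) : Prop :=
  ∀ i, a ≤ i → i < b → φ (i + 1) ∈ F.PiIn W (φ i)

/-- `S` admits an internal tangency within the subcomplex `W`. -/
def HasInternalTangencyIn (W S : Set X) : Prop :=
  ∃ (a b : ℤ) (φ : ℤ → X), a ≤ b ∧ F.IsPathOnIn W a b φ ∧
    (∀ i, a ≤ i → i ≤ b → φ i ∈ L.clsIn W S) ∧ φ a ∈ S ∧ φ b ∈ S ∧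
    ∃ i, a ≤ i ∧ i ≤ b ∧ φ i ∈ L.moIn W S

/-- `S` is an isolated invariant set within the subcomplex `W`. -/
def IsoInvIn (W S : Set X) : Prop :=
  F.InvariantIn W S ∧ ¬ F.HasInternalTangencyIn W S

/-- `N` is a trapping region within the subcomplex `W`. -/
def TrappingIn (W N : Set X) : Prop :=
  N ⊆ W ∧ F.Compat N ∧ ∀ x ∈ N, F.PiIn W x ⊆ N

/-- `N` is a backward trapping region within the subcomplex `W`. -/
def BackTrappingIn (W N : Set X) : Prop :=
  N ⊆ W ∧ F.Compat N ∧ ∀ x ∈ W, ∀ y ∈ F.PiIn W x, y ∈ N → x ∈ N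

/-- `A` is an attractor within the subcomplex `W`. -/
def AttractorIn (W A : Set X) : Prop :=
  ∃ N, F.TrappingIn W N ∧ A = F.InvPartIn W N

/-- `A` is a repeller within the subcomplex `W`. -/
def RepellerIn (W A : Set X) : Prop :=
  ∃ N, F.BackTrappingIn W N ∧ A = F.InvPartIn W N

/-- The α-limit set of a full solution `φ`. -/
def alphaIn (W : Set X) (φ : ℤ → X) : Set X :=
  ⋂ k : ℕ, F.InvPartIn W (F.upperC (φ '' {i : ℤ | i ≤ -(k : ℤ)}))

/-- The ω-limit set of a full solution `φ`. -/
def omegaIn (W : Set X) (φ : ℤ → X) : Set X :=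
  ⋂ k : ℕ, F.InvPartIn W (F.upperC (φ '' {i : ℤ | (k : ℤ) ≤ i}))

/-- `C(A',A)` : the set of cells lying on connections running from `A'` to `A`. -/
def ConnIn (W A' A : Set X) : Set X :=
  {x | ∃ φ : ℤ → X, F.IsSolIn W φ ∧ (∃ i, φ i = F.star x) ∧
        F.alphaIn W φ ⊆ A' ∧ F.omegaIn W φ ⊆ A}

/-- `(A, Rp)` is an attractor-repeller pair in the subcomplex `W`. -/
def ARPairIn (W A Rp : Set X) : Prop :=
  F.AttractorIn W A ∧ F.RepellerIn W Rp ∧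
    A = F.InvPartIn W (W \ Rp) ∧ Rp = F.InvPartIn W (W \ A)

/-- `M` is a Morse decomposition of the subcomplex `W`, with admissible order `le`. -/
def MorseDecompIn (W : Set X) {P : Type*} [Finite P] (le : P → P → Prop)
    (M : P → Set X) : Prop :=
  IsPartialOrder P le ∧
  (∀ r, F.IsoInvIn W (M r)) ∧
  (∀ r r', r ≠ r' → Disjoint (M r) (M r')) ∧
  (∀ φ : ℤ → X, F.IsSolIn W φ →
    ∃ r r', le r r' ∧ F.alphaIn W φ ⊆ M r' ∧ F.omegaIn W φ ⊆ M r) ∧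
  (∀ φ : ℤ → X, F.IsSolIn W φ → ∀ r,
    F.alphaIn W φ ⊆ M r → F.omegaIn W φ ⊆ M r → Set.range φ ⊆ M r)

/-- The Morse set `M(I)` of a family of sets indexed by `I ⊆ P`. -/
def MorseSetIn (W : Set X) {P : Type*} (M : P → Set X) (I : Set P) : Set X :=
  ⋃ r ∈ I, ⋃ r' ∈ I, F.ConnIn W (M r') (M r)

/-- `(P₁, P₂)` is an index pair for the isolated invariant set `S`. -/
def IndexPair (S P₁ P₂ : Set X) : Prop :=
  L.Closed P₁ ∧ L.Closed P₂ ∧ P₂ ⊆ P₁ ∧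
  (∀ x ∈ P₂, ∀ y ∈ F.Pi x, y ∈ P₁ → y ∈ P₂) ∧
  (∀ x ∈ P₁, (∃ y ∈ F.Pi x, y ∉ P₁) → x ∈ P₂) ∧
  S = F.InvPartIn Set.univ (P₁ \ P₂)

/-- `x ⤳_A y` : there is a path of length at least two in `A` from `x★` to `y★`. -/
def PathConn (A : Set X) (x y : X) : Prop :=
  ∃ (a b : ℤ) (φ : ℤ → X), a < b ∧
    (∀ i, a ≤ i → i < b → φ (i + 1) ∈ F.Pi (φ i)) ∧
    (∀ i, a ≤ i → i ≤ b → φ i ∈ A) ∧ φ a = F.star x ∧ φ b = F.star y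

/-- The chain recurrent set. -/
def CR : Set X := {x | F.PathConn Set.univ x x}

/-- `B` is a basic set: an equivalence class of mutual connectedness in `CR`. -/
def IsBasicSet (B : Set X) : Prop :=
  ∃ x ∈ F.CR, B = {y ∈ F.CR | F.PathConn Set.univ x y ∧ F.PathConn Set.univ y x}

/-- The set `E_P` of cells of `P₁` all of whose forward solutions meet `P₂`. -/
def Ep (P₁ P₂ : Set X) : Set X :=
  {x ∈ P₁ | ∀ φ : ℕ → X, φ 0 = x → (∀ i, φ (i + 1) ∈ F.Pi (φ i)) → ∃ i, φ i ∈ P₂}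

/-- The preorder `≤_𝒱` induced by the arrows of the multivector field. -/
def leV : X → X → Prop := Relation.ReflTransGen (fun y x => y ∈ F.Pi x)

/-- The multivector field is acyclic: `≤_𝒱` is a partial order. -/
def Acyclic : Prop := ∀ x y, F.leV x y → F.leV y x → x = y


/-! ### Auxiliary lemmas -/

section Aux

lemma mem_mclass_self (x : X) : x ∈ F.mclass x := (F.mclass_spec x).2

lemma mclass_eq_of_mem {x y : X} (h : y ∈ F.mclass x) : F.mclass y = F.mclass x :=
  (F.cover y).unique ⟨(F.mclass_spec y).1, (F.mclass_spec y).2⟩ ⟨(F.mclass_spec x).1, h⟩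

lemma star_spec (x : X) :
    F.star x ∈ F.mclass x ∧ ∀ z ∈ F.mclass x, L.le z (F.star x) :=
  ((F.isMV _ (F.mclass_spec x).1).2).exists.choose_spec

lemma star_mem_mclass (x : X) : F.star x ∈ F.mclass x := (F.star_spec x).1

lemma star_eq_of_mem {x y : X} (h : y ∈ F.mclass x) : F.star y = F.star x := by
  have hm : F.mclass y = F.mclass x := F.mclass_eq_of_mem h
  refine ((F.isMV _ (F.mclass_spec y).1).2).unique (F.star_spec y) ?_
  rw [hm]; exact F.star_spec x

lemma star_star (x : X) : F.star (F.star x) = F.star x :=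
  F.star_eq_of_mem (F.star_mem_mclass x)

lemma mclass_star (x : X) : F.mclass (F.star x) = F.mclass x :=
  F.mclass_eq_of_mem (F.star_mem_mclass x)

/-- Compatible sets: basic closure properties. -/
lemma compat_mem_of_mem {A : Set X} (hA : F.Compat A) {x y : X}
    (hx : x ∈ A) (hy : y ∈ F.mclass x) : y ∈ A := hA x hx hy

lemma compat_diff {A B : Set X} (hA : F.Compat A) (hB : F.Compat B) :
    F.Compat (A \ B) := by
  intro x hx y hy
  refine ⟨hA x hx.1 hy, fun hyB => hx.2 ?_⟩
  exact hB y hyB (F.mclass_eq_of_mem hy ▸ F.mem_mclass_self x)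

lemma compat_univ : F.Compat (Set.univ : Set X) := fun _ _ _ _ => trivial

lemma lowerC_eq_of_compat {A : Set X} (hA : F.Compat A) : F.lowerC A = A := by
  ext x
  exact ⟨fun h => h.1, fun h => ⟨h, hA x h⟩⟩

lemma lowerC_subset (A : Set X) : F.lowerC A ⊆ A := fun _ h => h.1

lemma lowerC_mono {A B : Set X} (h : A ⊆ B) : F.lowerC A ⊆ F.lowerC B :=
  fun x hx => ⟨h hx.1, hx.2.trans h⟩

lemma subset_upperC (A : Set X) : A ⊆ F.upperC A :=
  fun x hx => Set.mem_biUnion hx (F.mem_mclass_self x)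

lemma upperC_mono {A B : Set X} (h : A ⊆ B) : F.upperC A ⊆ F.upperC B := by
  intro x hx
  obtain ⟨a, ha, hm⟩ := Set.mem_iUnion₂.1 hx
  exact Set.mem_biUnion (h ha) hm

lemma upperC_compat (A : Set X) : F.Compat (F.upperC A) := by
  intro x hx y hy
  obtain ⟨a, ha, hm⟩ := Set.mem_iUnion₂.1 hx
  exact Set.mem_biUnion ha ((F.mclass_eq_of_mem hm) ▸ hy)

lemma upperC_subset_of_compat {A B : Set X} (hB : F.Compat B) (h : A ⊆ B) :
    F.upperC A ⊆ B := by
  intro x hx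
  obtain ⟨a, ha, hm⟩ := Set.mem_iUnion₂.1 hx
  exact hB a (h ha) hm

lemma invPart_subset (W A : Set X) : F.InvPartIn W A ⊆ A := fun _ h => h.1

lemma invPart_mono (W : Set X) {A B : Set X} (h : A ⊆ B) :
    F.InvPartIn W A ⊆ F.InvPartIn W B := by
  rintro x ⟨hxA, φ, hφ, hi, hval⟩
  exact ⟨h hxA, φ, hφ, hi, fun i => F.lowerC_mono h (hval i)⟩

lemma invPart_compat (A : Set X) : F.Compat (F.InvPartIn Set.univ A) := by
  rintro x ⟨hxA, φ, hφ, ⟨i, hi⟩, hval⟩ y hy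
  have hstar : F.star x ∈ F.lowerC A := hi ▸ hval i
  have hyA : y ∈ A := hstar.2 ((F.mclass_star x) ▸ hy)
  exact ⟨hyA, φ, hφ, ⟨i, hi.trans (F.star_eq_of_mem hy).symm⟩, hval⟩

/-- If a full solution passes through `z`, it passes through `z★`. -/
lemma sol_through_star {φ : ℤ → X} (hφ : F.IsSolIn Set.univ φ) {i : ℤ} {z : X}
    (hz : φ i = z) : ∃ j, φ j = F.star z := by
  by_cases h : z = F.star z
  · exact ⟨i, by rw [hz, ← h]⟩
  · refine ⟨i + 1, ?_⟩
    have := (hφ i).1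
    rw [hz] at this
    simpa [MVField.Pi, if_neg h] using this

end Aux


section Sol

/-- Concatenation of two full solutions meeting at a common value. -/
lemma sol_concat {φ ψ : ℤ → X} (hφ : F.IsSolIn Set.univ φ) (hψ : F.IsSolIn Set.univ ψ)
    {i₀ j₀ : ℤ} (h : φ i₀ = ψ j₀) :
    ∃ σ : ℤ → X, F.IsSolIn Set.univ σ ∧ (∀ i ≤ i₀, σ i = φ i) ∧
      (∀ i ≥ i₀, σ i = ψ (i - i₀ + j₀)) := by
  refine ⟨fun i => if i ≤ i₀ then φ i else ψ (i - i₀ + j₀), ?_, ?_, ?_⟩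
  · intro i
    beta_reduce
    by_cases h1 : i + 1 ≤ i₀
    · simp only [if_pos h1, if_pos (by omega : i ≤ i₀)]
      exact hφ i
    · by_cases h2 : i ≤ i₀
      · have hi : i = i₀ := by omega
        subst hi
        rw [if_neg h1, if_pos (le_refl i),
          (by ring : i + 1 - i + j₀ = j₀ + 1), h]
        exact hψ j₀
      · rw [if_neg h1, if_neg h2,
          (by ring : i + 1 - i₀ + j₀ = (i - i₀ + j₀) + 1)]
        exact hψ _
  · intro i hi; beta_reduce; rw [if_pos hi]
  · intro i hi
    beta_reduce
    by_cases h2 : i ≤ i₀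
    · have : i = i₀ := le_antisymm h2 hi
      simp [this, h]
    · simp [if_neg h2]

/-- Concatenation through a single `Π`-step: a solution reaching `x`, a step `y ∈ Π x`,
and a solution passing through `y★`. -/
lemma sol_step_concat {x y : X} (hy : y ∈ F.Pi x) {ρ ψ : ℤ → X}
    (hρ : F.IsSolIn Set.univ ρ) (hψ : F.IsSolIn Set.univ ψ)
    {i₀ j₀ : ℤ} (hx : ρ i₀ = x) (hs : ψ j₀ = F.star y) :
    ∃ σ : ℤ → X, F.IsSolIn Set.univ σ ∧ (∀ i ≤ i₀, σ i = ρ i) ∧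
      ∃ d, ∀ i ≥ i₀ + 2, σ i = ψ (i + d) := by
  set j' : ℤ := if y = F.star y then j₀ + 1 else j₀ with hj'
  refine ⟨fun i => if i ≤ i₀ then ρ i else if i = i₀ + 1 then y else ψ (i - (i₀ + 2) + j'),
    ?_, ?_, ⟨j' - (i₀ + 2), ?_⟩⟩
  · intro i
    beta_reduce
    by_cases h1 : i + 1 ≤ i₀
    · rw [if_pos h1, if_pos (by omega : i ≤ i₀)]
      exact hρ i
    · by_cases h2 : i ≤ i₀
      · have hi : i = i₀ := by omega
        subst hi
        rw [if_neg h1, if_pos rfl, if_pos (le_refl i), hx]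
        exact ⟨hy, trivial⟩
      · by_cases h3 : i = i₀ + 1
        · subst h3
          rw [if_neg (by omega : ¬ i₀ + 1 + 1 ≤ i₀), if_neg (by omega : ¬ i₀ + 1 + 1 = i₀ + 1),
            if_neg (by omega : ¬ i₀ + 1 ≤ i₀), if_pos rfl,
            (by ring : i₀ + 1 + 1 - (i₀ + 2) + j' = j')]
          by_cases hc : y = F.star y
          · rw [hj', if_pos hc]
            have h5 := hψ j₀
            rw [hs, ← hc] at h5
            exact h5
          · rw [hj', if_neg hc, hs]
            refine ⟨?_, trivial⟩
            simp [MVField.Pi, if_neg hc]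
        · rw [if_neg (by omega : ¬ i + 1 ≤ i₀), if_neg (by omega : ¬ i + 1 = i₀ + 1),
            if_neg h2, if_neg h3,
            (by ring : i + 1 - (i₀ + 2) + j' = (i - (i₀ + 2) + j') + 1)]
          exact hψ _
  · intro i hi; beta_reduce; rw [if_pos hi]
  · intro i hi
    beta_reduce
    rw [if_neg (by omega : ¬ i ≤ i₀), if_neg (by omega : ¬ i = i₀ + 1)]
    congr 1; ring

/-- Periodic solution obtained from a loop in a solution. -/
lemma sol_periodic {φ : ℤ → X} (hφ : F.IsSolIn Set.univ φ) {a b : ℤ} (hab : a < b)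
    (h : φ a = φ b) : F.IsSolIn Set.univ (fun j => φ (a + j % (b - a))) := by
  intro j
  set p := b - a with hp
  have hp0 : 0 < p := by omega
  have h1 : 0 ≤ j % p := Int.emod_nonneg j (by omega)
  have h2 : j % p < p := Int.emod_lt_of_pos j hp0
  have hj1 : (j + 1) % p = (j % p + 1) % p := by
    rw [Int.add_emod j 1 p, Int.add_emod (j % p) 1 p, Int.emod_emod_of_dvd _ dvd_rfl]
  by_cases hc : j % p + 1 < p
  · have he : (j + 1) % p = j % p + 1 := by
      rw [hj1]; exact Int.emod_eq_of_lt (by omega) hc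
    simp only [he]
    rw [(by ring : a + (j % p + 1) = (a + j % p) + 1)]
    exact hφ _
  · have hpp : j % p + 1 = p := by omega
    have he : (j + 1) % p = 0 := by rw [hj1, hpp, Int.emod_self]
    simp only [he, add_zero]
    have hb1 : a + j % p = b - 1 := by omega
    rw [hb1, h]
    have h6 := hφ (b - 1)
    rw [(by ring : b - 1 + 1 = b)] at h6
    exact h6

end Sol


section Limits

lemma omega_subset_term {φ : ℤ → X} (k : ℕ) :
    F.omegaIn Set.univ φ ⊆
      F.InvPartIn Set.univ (F.upperC (φ '' {i : ℤ | (k : ℤ) ≤ i})) :=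
  Set.iInter_subset _ k

lemma alpha_subset_term {φ : ℤ → X} (k : ℕ) :
    F.alphaIn Set.univ φ ⊆
      F.InvPartIn Set.univ (F.upperC (φ '' {i : ℤ | i ≤ -(k : ℤ)})) :=
  Set.iInter_subset _ k

lemma omega_subset_of_compat {φ : ℤ → X} {B : Set X} (hB : F.Compat B)
    (h : ∀ i, φ i ∈ B) : F.omegaIn Set.univ φ ⊆ B := by
  refine (F.omega_subset_term 0).trans ?_
  refine (F.invPart_subset _ _).trans (F.upperC_subset_of_compat hB ?_)
  rintro z ⟨i, _, rfl⟩; exact h i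

lemma alpha_subset_of_compat {φ : ℤ → X} {B : Set X} (hB : F.Compat B)
    (h : ∀ i, φ i ∈ B) : F.alphaIn Set.univ φ ⊆ B := by
  refine (F.alpha_subset_term 0).trans ?_
  refine (F.invPart_subset _ _).trans (F.upperC_subset_of_compat hB ?_)
  rintro z ⟨i, _, rfl⟩; exact h i

lemma omega_subset_of_cofinal {φ ψ : ℤ → X}
    (h : ∀ k : ℤ, ∃ k' : ℤ, φ '' {i : ℤ | k' ≤ i} ⊆ ψ '' {i : ℤ | k ≤ i}) :
    F.omegaIn Set.univ φ ⊆ F.omegaIn Set.univ ψ := by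
  intro x hx
  refine Set.mem_iInter.2 fun k => ?_
  obtain ⟨k', hk'⟩ := h (k : ℤ)
  have h1 : x ∈ F.InvPartIn Set.univ (F.upperC (φ '' {i : ℤ | (k'.toNat : ℤ) ≤ i})) :=
    Set.mem_iInter.1 hx k'.toNat
  refine F.invPart_mono _ (F.upperC_mono ?_) h1
  refine (Set.image_mono ?_).trans hk'
  intro i hi
  exact le_trans (Int.self_le_toNat k') hi

lemma alpha_subset_of_cofinal {φ ψ : ℤ → X}
    (h : ∀ k : ℤ, ∃ k' : ℤ, φ '' {i : ℤ | i ≤ k'} ⊆ ψ '' {i : ℤ | i ≤ k}) :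
    F.alphaIn Set.univ φ ⊆ F.alphaIn Set.univ ψ := by
  intro x hx
  refine Set.mem_iInter.2 fun k => ?_
  obtain ⟨k', hk'⟩ := h (-(k : ℤ))
  have h1 : x ∈ F.InvPartIn Set.univ (F.upperC (φ '' {i : ℤ | i ≤ -(((-k').toNat : ℤ))})) :=
    Set.mem_iInter.1 hx (-k').toNat
  refine F.invPart_mono _ (F.upperC_mono ?_) h1
  refine (Set.image_mono ?_).trans hk'
  intro i hi
  have : (-k') ≤ ((-k').toNat : ℤ) := Int.self_le_toNat _
  simp only [Set.mem_setOf_eq] at hi ⊢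
  omega

/-- ω-limits agree for solutions which are eventually equal up to an index shift. -/
lemma omega_congr {φ ψ : ℤ → X} {c d : ℤ} (h : ∀ i ≥ c, φ i = ψ (i + d)) :
    F.omegaIn Set.univ φ = F.omegaIn Set.univ ψ := by
  apply Set.Subset.antisymm
  · refine F.omega_subset_of_cofinal fun k => ⟨c ⊔ (k - d), ?_⟩
    rintro z ⟨i, hi, rfl⟩
    simp only [Set.mem_setOf_eq, le_sup_iff] at hi
    have hic : c ≤ i := le_trans le_sup_left hi
    rw [h i hic]
    exact ⟨i + d, by simp only [Set.mem_setOf_eq]; omega, rfl⟩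
  · refine F.omega_subset_of_cofinal fun k => ⟨(c + d) ⊔ (k + d), ?_⟩
    rintro z ⟨i, hi, rfl⟩
    simp only [Set.mem_setOf_eq] at hi
    have : ψ i = φ (i - d) := by
      rw [h (i - d) (by omega), (by ring : i - d + d = i)]
    rw [this]
    exact ⟨i - d, by simp only [Set.mem_setOf_eq]; omega, rfl⟩

/-- α-limits agree for solutions which are eventually equal (backwards) up to a shift. -/
lemma alpha_congr {φ ψ : ℤ → X} {c d : ℤ} (h : ∀ i ≤ c, φ i = ψ (i + d)) :
    F.alphaIn Set.univ φ = F.alphaIn Set.univ ψ := by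
  apply Set.Subset.antisymm
  · refine F.alpha_subset_of_cofinal fun k => ⟨c ⊓ (k - d), ?_⟩
    rintro z ⟨i, hi, rfl⟩
    simp only [Set.mem_setOf_eq] at hi
    have hic : i ≤ c := le_trans hi inf_le_left
    rw [h i hic]
    exact ⟨i + d, by simp only [Set.mem_setOf_eq]; omega, rfl⟩
  · refine F.alpha_subset_of_cofinal fun k => ⟨(c + d) ⊓ (k + d), ?_⟩
    rintro z ⟨i, hi, rfl⟩
    simp only [Set.mem_setOf_eq] at hi
    have : ψ i = φ (i - d) := by
      rw [h (i - d) (by omega), (by ring : i - d + d = i)]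
    rw [this]
    exact ⟨i - d, by simp only [Set.mem_setOf_eq]; omega, rfl⟩

end Limits


section Nonempty

lemma omega_nonempty {φ : ℤ → X} (hφ : F.IsSolIn Set.univ φ) :
    (F.omegaIn Set.univ φ).Nonempty := by
  obtain ⟨z, hz⟩ := Finite.exists_infinite_fiber (fun n : ℕ => φ (n : ℤ))
  have hzinf : {n : ℕ | φ (n : ℤ) = z}.Infinite := by
    rw [← Set.infinite_coe_iff]
    exact hz
  refine ⟨z, Set.mem_iInter.2 fun k => ?_⟩
  obtain ⟨n₁, hn₁mem, hn₁⟩ := hzinf.exists_gt k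
  obtain ⟨n₂, hn₂mem, hn₂⟩ := hzinf.exists_gt n₁
  have hab : (n₁ : ℤ) < (n₂ : ℤ) := by exact_mod_cast hn₂
  have heq : φ (n₁ : ℤ) = φ (n₂ : ℤ) := by rw [hn₁mem, hn₂mem]
  have hτ := F.sol_periodic hφ hab heq
  have hmem : ∀ j : ℤ, ((n₁ : ℤ) + j % ((n₂ : ℤ) - (n₁ : ℤ))) ∈ {i : ℤ | (k : ℤ) ≤ i} := by
    intro j
    have h1 := Int.emod_nonneg j (by omega : ((n₂ : ℤ) - (n₁ : ℤ)) ≠ 0)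
    have hkn : (k : ℤ) ≤ (n₁ : ℤ) := by exact_mod_cast hn₁.le
    simp only [Set.mem_setOf_eq]
    omega
  have hval : ∀ j : ℤ,
      (fun j => φ ((n₁ : ℤ) + j % ((n₂ : ℤ) - (n₁ : ℤ)))) j ∈ φ '' {i : ℤ | (k : ℤ) ≤ i} :=
    fun j => Set.mem_image_of_mem φ (hmem j)
  have hz0 : (fun j => φ ((n₁ : ℤ) + j % ((n₂ : ℤ) - (n₁ : ℤ)))) 0 = z := by
    simp only [Int.zero_emod, add_zero]
    exact hn₁mem
  have hzS : z ∈ φ '' {i : ℤ | (k : ℤ) ≤ i} := hz0 ▸ hval 0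
  obtain ⟨j, hj⟩ := F.sol_through_star hτ hz0
  refine ⟨F.subset_upperC _ hzS, _, hτ, ⟨j, hj⟩, fun i => ?_⟩
  rw [F.lowerC_eq_of_compat (F.upperC_compat _)]
  exact F.subset_upperC _ (hval i)

lemma alpha_nonempty {φ : ℤ → X} (hφ : F.IsSolIn Set.univ φ) :
    (F.alphaIn Set.univ φ).Nonempty := by
  obtain ⟨z, hz⟩ := Finite.exists_infinite_fiber (fun n : ℕ => φ (-(n : ℤ)))
  have hzinf : {n : ℕ | φ (-(n : ℤ)) = z}.Infinite := by
    rw [← Set.infinite_coe_iff]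
    exact hz
  refine ⟨z, Set.mem_iInter.2 fun k => ?_⟩
  obtain ⟨n₁, hn₁mem, hn₁⟩ := hzinf.exists_gt k
  obtain ⟨n₂, hn₂mem, hn₂⟩ := hzinf.exists_gt n₁
  have hn12 : (n₁ : ℤ) < (n₂ : ℤ) := by exact_mod_cast hn₂
  have hab : (-(n₂ : ℤ)) < (-(n₁ : ℤ)) := by omega
  have heq : φ (-(n₂ : ℤ)) = φ (-(n₁ : ℤ)) := by rw [hn₁mem, hn₂mem]
  have hτ := F.sol_periodic hφ hab heq
  have hmem : ∀ j : ℤ,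
      ((-(n₂ : ℤ)) + j % ((-(n₁ : ℤ)) - (-(n₂ : ℤ)))) ∈ {i : ℤ | i ≤ -(k : ℤ)} := by
    intro j
    have h1 := Int.emod_nonneg j (by omega : ((-(n₁ : ℤ)) - (-(n₂ : ℤ))) ≠ 0)
    have h2 := Int.emod_lt_of_pos j (by omega : 0 < ((-(n₁ : ℤ)) - (-(n₂ : ℤ))))
    have hkn : (k : ℤ) < (n₁ : ℤ) := by exact_mod_cast hn₁
    simp only [Set.mem_setOf_eq]
    omega
  have hval : ∀ j : ℤ,
      (fun j => φ ((-(n₂ : ℤ)) + j % ((-(n₁ : ℤ)) - (-(n₂ : ℤ))))) j ∈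
        φ '' {i : ℤ | i ≤ -(k : ℤ)} :=
    fun j => Set.mem_image_of_mem φ (hmem j)
  have hz0 : (fun j => φ ((-(n₂ : ℤ)) + j % ((-(n₁ : ℤ)) - (-(n₂ : ℤ))))) 0 = z := by
    simp only [Int.zero_emod, add_zero]
    exact hn₂mem
  have hzS : z ∈ φ '' {i : ℤ | i ≤ -(k : ℤ)} := hz0 ▸ hval 0
  obtain ⟨j, hj⟩ := F.sol_through_star hτ hz0
  refine ⟨F.subset_upperC _ hzS, _, hτ, ⟨j, hj⟩, fun i => ?_⟩
  rw [F.lowerC_eq_of_compat (F.upperC_compat _)]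
  exact F.subset_upperC _ (hval i)

end Nonempty


section Morse

lemma regPart_subset (x : X) : F.regPart x ⊆ F.mclass x := by
  unfold MVField.regPart
  split_ifs
  · exact subset_rfl
  · exact Set.diff_subset

variable {P : Type*} [Finite P] {le : P → P → Prop} {M : P → Set X}

lemma conn_compat (A' A : Set X) : F.Compat (F.ConnIn Set.univ A' A) := by
  rintro x ⟨φ, hφ, ⟨i, hi⟩, hα, hω⟩ y hy
  exact ⟨φ, hφ, ⟨i, hi.trans (F.star_eq_of_mem hy).symm⟩, hα, hω⟩

lemma morseSet_compat (M : P → Set X) (I : Set P) :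
    F.Compat (F.MorseSetIn Set.univ M I) := by
  intro x hx y hy
  simp only [MVField.MorseSetIn, Set.mem_iUnion] at hx ⊢
  obtain ⟨r, hr, r', hr', hc⟩ := hx
  exact ⟨r, hr, r', hr', F.conn_compat _ _ x hc hy⟩

lemma M_compat (hM : F.MorseDecompIn Set.univ le M) (r : P) : F.Compat (M r) := by
  have h := (hM.2.1 r).1
  rw [← h]
  exact F.invPart_compat _

lemma M_sol (hM : F.MorseDecompIn Set.univ le M) (r : P) {z : X} (hz : z ∈ M r) :
    ∃ φ : ℤ → X, F.IsSolIn Set.univ φ ∧ (∃ i, φ i = F.star z) ∧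
      F.alphaIn Set.univ φ ⊆ M r ∧ F.omegaIn Set.univ φ ⊆ M r := by
  have h := (hM.2.1 r).1
  rw [← h] at hz
  obtain ⟨hzA, φ, hφ, hi, hval⟩ := hz
  have hvals : ∀ i, φ i ∈ M r := fun i => F.lowerC_subset _ (hval i)
  exact ⟨φ, hφ, hi, F.alpha_subset_of_compat (F.M_compat hM r) hvals,
    F.omega_subset_of_compat (F.M_compat hM r) hvals⟩

lemma M_subset_morseSet (hM : F.MorseDecompIn Set.univ le M) {I : Set P} {r : P}
    (hr : r ∈ I) : M r ⊆ F.MorseSetIn Set.univ M I := by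
  intro z hz
  obtain ⟨φ, hφ, hi, hα, hω⟩ := F.M_sol hM r hz
  simp only [MVField.MorseSetIn, Set.mem_iUnion]
  exact ⟨r, hr, r, hr, φ, hφ, hi, hα, hω⟩

lemma omega_M_unique (hM : F.MorseDecompIn Set.univ le M) {φ : ℤ → X}
    (hφ : F.IsSolIn Set.univ φ) {r s : P} (h1 : F.omegaIn Set.univ φ ⊆ M r)
    (h2 : F.omegaIn Set.univ φ ⊆ M s) : r = s := by
  by_contra hne
  obtain ⟨z, hz⟩ := F.omega_nonempty hφ
  exact Set.disjoint_left.1 (hM.2.2.1 r s hne) (h1 hz) (h2 hz)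

lemma alpha_M_unique (hM : F.MorseDecompIn Set.univ le M) {φ : ℤ → X}
    (hφ : F.IsSolIn Set.univ φ) {r s : P} (h1 : F.alphaIn Set.univ φ ⊆ M r)
    (h2 : F.alphaIn Set.univ φ ⊆ M s) : r = s := by
  by_contra hne
  obtain ⟨z, hz⟩ := F.alpha_nonempty hφ
  exact Set.disjoint_left.1 (hM.2.2.1 r s hne) (h1 hz) (h2 hz)

/-- A connection from `M r'` to `M r` with `r ∉ J` avoids the Morse set of a
down-set `J`. -/
lemma conn_disjoint_morseSet (hM : F.MorseDecompIn Set.univ le M) {J : Set P}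
    (hJ : ∀ a b, le a b → b ∈ J → a ∈ J) {r r' : P} (hr : r ∉ J) {z : X}
    (hz : z ∈ F.ConnIn Set.univ (M r') (M r)) :
    z ∉ F.MorseSetIn Set.univ M J := by
  intro hzJ
  obtain ⟨φ₁, hφ₁, ⟨i₀, hi₀⟩, hα₁, hω₁⟩ := hz
  simp only [MVField.MorseSetIn, Set.mem_iUnion] at hzJ
  obtain ⟨s, hs, s', hs', φ₂, hφ₂, ⟨j₀, hj₀⟩, hα₂, hω₂⟩ := hzJ
  obtain ⟨σ, hσ, hpre, hpost⟩ := F.sol_concat hφ₂ hφ₁ (hj₀.trans hi₀.symm)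
  have hα : F.alphaIn Set.univ σ = F.alphaIn Set.univ φ₂ :=
    F.alpha_congr (c := j₀) (d := 0) (fun i hi => by rw [hpre i hi, add_zero])
  have hω : F.omegaIn Set.univ σ = F.omegaIn Set.univ φ₁ :=
    F.omega_congr (c := j₀) (d := i₀ - j₀)
      (fun i hi => by rw [hpost i hi]; congr 1; ring)
  obtain ⟨u, u', huu', hαu, hωu⟩ := hM.2.2.2.1 σ hσ
  have hu : u = r := F.omega_M_unique hM hσ hωu (by rw [hω]; exact hω₁)
  have hu' : u' = s' := F.alpha_M_unique hM hσ hαu (by rw [hα]; exact hα₂)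
  subst hu; subst hu'
  exact hr (hJ _ _ huu' hs')

/-- Characterization of `Inv (X ∖ M(J))` for a down-set `J`. -/
lemma mem_Q_iff (hM : F.MorseDecompIn Set.univ le M) {J : Set P}
    (hJ : ∀ a b, le a b → b ∈ J → a ∈ J) (x : X) :
    x ∈ F.InvPartIn Set.univ (Set.univ \ F.MorseSetIn Set.univ M J) ↔
      ∃ (φ : ℤ → X) (r : P), F.IsSolIn Set.univ φ ∧ (∃ i, φ i = F.star x) ∧
        F.omegaIn Set.univ φ ⊆ M r ∧ r ∉ J := by
  have hcompl : F.Compat (Set.univ \ F.MorseSetIn Set.univ M J) :=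
    F.compat_diff F.compat_univ (F.morseSet_compat M J)
  constructor
  · rintro ⟨hxA, φ, hφ, hi, hval⟩
    obtain ⟨r, r', hrr', hα, hω⟩ := hM.2.2.2.1 φ hφ
    refine ⟨φ, r, hφ, hi, hω, fun hrJ => ?_⟩
    obtain ⟨z, hz⟩ := F.omega_nonempty hφ
    have hzA : z ∈ Set.univ \ F.MorseSetIn Set.univ M J :=
      F.omega_subset_of_compat hcompl (fun i => F.lowerC_subset _ (hval i)) hz
    exact hzA.2 (F.M_subset_morseSet hM hrJ (hω hz))
  · rintro ⟨φ, r, hφ, ⟨i₀, hi₀⟩, hω, hrJ⟩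
    obtain ⟨u, u', huu', hαu, hωu⟩ := hM.2.2.2.1 φ hφ
    have hu : u = r := F.omega_M_unique hM hφ hωu hω
    subst hu
    have hnotJ : ∀ z, (∃ j, φ j = F.star z) → z ∉ F.MorseSetIn Set.univ M J := by
      intro z hj
      exact F.conn_disjoint_morseSet hM hJ hrJ ⟨φ, hφ, hj, hαu, hωu⟩
    refine ⟨⟨trivial, hnotJ x ⟨i₀, hi₀⟩⟩, φ, hφ, ⟨i₀, hi₀⟩, fun i => ?_⟩
    rw [F.lowerC_eq_of_compat hcompl]
    exact ⟨trivial, hnotJ (φ i) (F.sol_through_star hφ rfl)⟩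

/-- Backward step property of `Inv (X ∖ M(J))` for a down-set `J`. -/
lemma Q_step (hM : F.MorseDecompIn Set.univ le M)
    (hX : F.InvariantIn Set.univ Set.univ) {J : Set P}
    (hJ : ∀ a b, le a b → b ∈ J → a ∈ J) {x y : X} (hy : y ∈ F.Pi x)
    (hyQ : y ∈ F.InvPartIn Set.univ (Set.univ \ F.MorseSetIn Set.univ M J)) :
    x ∈ F.InvPartIn Set.univ (Set.univ \ F.MorseSetIn Set.univ M J) := by
  by_cases hxy : y ∈ F.mclass x
  · exact F.invPart_compat _ y hyQ ((F.mclass_eq_of_mem hxy).symm ▸ F.mem_mclass_self x)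
  · have hxx : x = F.star x := by
      by_contra hne
      apply hxy
      have hPi : F.Pi x = {F.star x} := by simp [MVField.Pi, if_neg hne]
      rw [hPi, Set.mem_singleton_iff] at hy
      rw [hy]
      exact F.star_mem_mclass x
    have hxInv : x ∈ F.InvPartIn Set.univ Set.univ := by rw [hX]; trivial
    obtain ⟨-, ρ, hρ, ⟨i₀, hi₀⟩, -⟩ := hxInv
    rw [← hxx] at hi₀
    obtain ⟨φ, r, hφ, ⟨j₀, hj₀⟩, hω, hrJ⟩ := (F.mem_Q_iff hM hJ y).1 hyQ
    obtain ⟨σ, hσ, hpre, d, hpost⟩ := F.sol_step_concat hy hρ hφ hi₀ hj₀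
    have hωσ : F.omegaIn Set.univ σ = F.omegaIn Set.univ φ :=
      F.omega_congr (c := i₀ + 2) (d := d) hpost
    refine (F.mem_Q_iff hM hJ x).2 ⟨σ, r, hσ, ⟨i₀, ?_⟩, by rw [hωσ]; exact hω, hrJ⟩
    rw [hpre i₀ le_rfl, ← hxx]
    exact hi₀

/-- Single face-relation step. -/
lemma Q_step_face (hM : F.MorseDecompIn Set.univ le M)
    (hX : F.InvariantIn Set.univ Set.univ) {J : Set P}
    (hJ : ∀ a b, le a b → b ∈ J → a ∈ J) {b c : X} (hbc : L.κ c b ≠ 0)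
    (hb : b ∈ F.InvPartIn Set.univ (Set.univ \ F.MorseSetIn Set.univ M J)) :
    c ∈ F.InvPartIn Set.univ (Set.univ \ F.MorseSetIn Set.univ M J) := by
  by_cases hm : b ∈ F.mclass c
  · exact F.invPart_compat _ b hb ((F.mclass_eq_of_mem hm).symm ▸ F.mem_mclass_self c)
  · have hble : L.le b (F.star c) :=
      Relation.ReflTransGen.trans (Relation.ReflTransGen.single hbc)
        ((F.star_spec c).2 c (F.mem_mclass_self c))
    have hbPi : b ∈ F.Pi (F.star c) := by
      rw [MVField.Pi, if_pos (F.star_star c).symm]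
      refine ⟨⟨F.star c, rfl, hble⟩, fun hreg => ?_⟩
      exact hm ((F.mclass_star c) ▸ F.regPart_subset (F.star c) hreg)
    have hstarQ := F.Q_step hM hX hJ hbPi hb
    exact F.invPart_compat _ _ hstarQ ((F.mclass_star c).symm ▸ F.mem_mclass_self c)

lemma Q_up (hM : F.MorseDecompIn Set.univ le M)
    (hX : F.InvariantIn Set.univ Set.univ) {J : Set P}
    (hJ : ∀ a b, le a b → b ∈ J → a ∈ J) {z a : X}
    (hz : z ∈ F.InvPartIn Set.univ (Set.univ \ F.MorseSetIn Set.univ M J))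
    (hle : L.le z a) :
    a ∈ F.InvPartIn Set.univ (Set.univ \ F.MorseSetIn Set.univ M J) := by
  induction hle with
  | refl => exact hz
  | tail hab hr ih => exact F.Q_step_face hM hX hJ hr ih

lemma N_closed (hM : F.MorseDecompIn Set.univ le M)
    (hX : F.InvariantIn Set.univ Set.univ) {J : Set P}
    (hJ : ∀ a b, le a b → b ∈ J → a ∈ J) :
    L.Closed (Set.univ \ F.InvPartIn Set.univ
      (Set.univ \ F.MorseSetIn Set.univ M J)) := by
  unfold Lefschetz.Closed
  apply Set.Subset.antisymm
  · rintro z ⟨a, ha, hle⟩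
    exact ⟨trivial, fun hzQ => ha.2 (F.Q_up hM hX hJ hzQ hle)⟩
  · intro a ha
    exact ⟨a, ha, Relation.ReflTransGen.refl⟩

end Morse

end MVField

end CMVF

open CMVF

variable {R : Type*} [Ring R] {X : Type*} [Fintype X]

/-- Theorem: for a convex `I ⊆ ℙ`, with `I^≤ := {r | ∃ s ∈ I, r ≤ s}`, `I^< := I^≤ ∖ I`
and `N(J) := X ∖ Inv(X ∖ M(J))`, the pair `(N(I^≤), N(I^<))` is an index pair for `M(I)`. -/
theorem morse_set_index_pair (L : Lefschetz R X) (F : MVField L)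
    (hX : F.InvariantIn Set.univ Set.univ)
    {P : Type*} [Finite P] (le : P → P → Prop) (M : P → Set X)
    (hM : F.MorseDecompIn Set.univ le M) (I : Set P)
    (hconv : ∀ r s r', le r s → le s r' → r ∈ I → r' ∈ I → s ∈ I) :
    F.IndexPair (F.MorseSetIn Set.univ M I)
      (Set.univ \ F.InvPartIn Set.univ
        (Set.univ \ F.MorseSetIn Set.univ M {r | ∃ s ∈ I, le r s}))
      (Set.univ \ F.InvPartIn Set.univ
        (Set.univ \ F.MorseSetIn Set.univ M ({r | ∃ s ∈ I, le r s} \ I))) := by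
  have htrans : ∀ a b c, le a b → le b c → le a c := fun a b c h1 h2 =>
    hM.1.toIsPreorder.toIsTrans.trans a b c h1 h2
  have hJle : ∀ a b, le a b → b ∈ {r | ∃ s ∈ I, le r s} → a ∈ {r | ∃ s ∈ I, le r s} := by
    rintro a b hab ⟨s, hsI, hbs⟩
    exact ⟨s, hsI, htrans a b s hab hbs⟩
  have hJlt : ∀ a b, le a b → b ∈ ({r | ∃ s ∈ I, le r s} \ I) →
      a ∈ ({r | ∃ s ∈ I, le r s} \ I) := by
    rintro a b hab ⟨hbIle, hbI⟩
    refine ⟨hJle a b hab hbIle, fun haI => hbI ?_⟩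
    obtain ⟨s, hsI, hbs⟩ := hbIle
    exact hconv a b s hab hbs haI hsI
  have hQc : F.Compat
      ((F.InvPartIn Set.univ
        (Set.univ \ F.MorseSetIn Set.univ M ({r | ∃ s ∈ I, le r s} \ I))) \
       (F.InvPartIn Set.univ
        (Set.univ \ F.MorseSetIn Set.univ M {r | ∃ s ∈ I, le r s}))) :=
    F.compat_diff (F.invPart_compat _) (F.invPart_compat _)
  refine ⟨F.N_closed hM hX hJle, F.N_closed hM hX hJlt, ?_, ?_, ?_, ?_⟩
  · -- P₂ ⊆ P₁
    intro x hx
    refine ⟨trivial, fun hxQ₁ => hx.2 (F.invPart_mono _ ?_ hxQ₁)⟩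
    intro z hz
    refine ⟨trivial, fun hzlt => hz.2 ?_⟩
    simp only [MVField.MorseSetIn, Set.mem_iUnion] at hzlt ⊢
    obtain ⟨a, ha, b, hb, hc⟩ := hzlt
    exact ⟨a, ha.1, b, hb.1, hc⟩
  · -- positive invariance
    intro x hx y hy _
    exact ⟨trivial, fun hyQ₂ => hx.2 (F.Q_step hM hX hJlt hy hyQ₂)⟩
  · -- exit set condition
    rintro x hx ⟨y, hyPi, hyn⟩
    have hyQ₁ : y ∈ F.InvPartIn Set.univ
        (Set.univ \ F.MorseSetIn Set.univ M {r | ∃ s ∈ I, le r s}) := by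
      by_contra h
      exact hyn ⟨trivial, h⟩
    exact absurd (F.Q_step hM hX hJle hyPi hyQ₁) hx.2
  · -- the Morse set is the invariant part of P₁ \ P₂
    have hPdiff : (Set.univ \ F.InvPartIn Set.univ
          (Set.univ \ F.MorseSetIn Set.univ M {r | ∃ s ∈ I, le r s})) \
        (Set.univ \ F.InvPartIn Set.univ
          (Set.univ \ F.MorseSetIn Set.univ M ({r | ∃ s ∈ I, le r s} \ I))) =
        (F.InvPartIn Set.univ
          (Set.univ \ F.MorseSetIn Set.univ M ({r | ∃ s ∈ I, le r s} \ I))) \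
        (F.InvPartIn Set.univ
          (Set.univ \ F.MorseSetIn Set.univ M {r | ∃ s ∈ I, le r s})) := by
      ext z; constructor
      · rintro ⟨⟨-, h1⟩, h2⟩
        refine ⟨?_, h1⟩
        by_contra h
        exact h2 ⟨trivial, h⟩
      · rintro ⟨h1, h2⟩
        exact ⟨⟨trivial, h2⟩, fun hc => hc.2 h1⟩
    rw [hPdiff]
    -- the key auxiliary fact
    have hnotlt : ∀ (v : P) (z : X), z ∈ M v →
        z ∈ (F.InvPartIn Set.univ
          (Set.univ \ F.MorseSetIn Set.univ M ({r | ∃ s ∈ I, le r s} \ I))) \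
        (F.InvPartIn Set.univ
          (Set.univ \ F.MorseSetIn Set.univ M {r | ∃ s ∈ I, le r s})) →
        v ∉ ({r | ∃ s ∈ I, le r s} \ I) := by
      intro v z hzM hzQ hvlt
      obtain ⟨σ₀, hσ₀, ⟨m, hm⟩, hασ₀, hωσ₀⟩ := F.M_sol hM v hzM
      obtain ⟨ψ, t, hψ, ⟨j₂, hj₂⟩, hωψ, htlt⟩ := (F.mem_Q_iff hM hJlt z).1 hzQ.1
      obtain ⟨σ, hσ, hpre, hpost⟩ := F.sol_concat hσ₀ hψ (hm.trans hj₂.symm)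
      have hασ := F.alpha_congr (φ := σ) (ψ := σ₀) (c := m) (d := 0)
        (fun i hi => by rw [hpre i hi, add_zero])
      have hωσ := F.omega_congr (φ := σ) (ψ := ψ) (c := m) (d := j₂ - m)
        (fun i hi => by rw [hpost i hi]; congr 1; ring)
      obtain ⟨u, u', huu', hαu, hωu⟩ := hM.2.2.2.1 σ hσ
      have hu : u = t := F.omega_M_unique hM hσ hωu (by rw [hωσ]; exact hωψ)
      have hu' : u' = v := F.alpha_M_unique hM hσ hαu (by rw [hασ]; exact hασ₀)
      subst hu; subst hu'
      have htIle : u ∈ {r | ∃ s ∈ I, le r s} := by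
        by_contra hc
        exact hzQ.2 ((F.mem_Q_iff hM hJle z).2
          ⟨σ, u, hσ, ⟨m, by rw [hpre m le_rfl]; exact hm⟩, hωu, hc⟩)
      have htI : u ∈ I := by
        by_contra hc
        exact htlt ⟨htIle, hc⟩
      obtain ⟨s₀, hs₀I, hvs₀⟩ := hvlt.1
      exact hvlt.2 (hconv u u' s₀ huu' hvs₀ htI hs₀I)
    ext x
    constructor
    · -- Morse set ⊆ invariant part
      intro hx
      simp only [MVField.MorseSetIn, Set.mem_iUnion] at hx
      obtain ⟨r, hrI, r', hr'I, φ, hφ, ⟨i₀, hi₀⟩, hα, hω⟩ := hx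
      have key : ∀ z, (∃ j, φ j = F.star z) →
          z ∈ (F.InvPartIn Set.univ
            (Set.univ \ F.MorseSetIn Set.univ M ({r | ∃ s ∈ I, le r s} \ I))) \
          (F.InvPartIn Set.univ
            (Set.univ \ F.MorseSetIn Set.univ M {r | ∃ s ∈ I, le r s})) := by
        rintro z ⟨j₁, hj₁⟩
        constructor
        · exact (F.mem_Q_iff hM hJlt z).2 ⟨φ, r, hφ, ⟨j₁, hj₁⟩, hω, fun h => h.2 hrI⟩
        · intro hzQ₁
          obtain ⟨ψ, s, hψ, ⟨j₂, hj₂⟩, hωψ, hsIle⟩ := (F.mem_Q_iff hM hJle z).1 hzQ₁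
          obtain ⟨σ, hσ, hpre, hpost⟩ := F.sol_concat hφ hψ (hj₁.trans hj₂.symm)
          have hασ := F.alpha_congr (φ := σ) (ψ := φ) (c := j₁) (d := 0)
            (fun i hi => by rw [hpre i hi, add_zero])
          have hωσ := F.omega_congr (φ := σ) (ψ := ψ) (c := j₁) (d := j₂ - j₁)
            (fun i hi => by rw [hpost i hi]; congr 1; ring)
          obtain ⟨u, u', huu', hαu, hωu⟩ := hM.2.2.2.1 σ hσ
          have hu : u = s := F.omega_M_unique hM hσ hωu (by rw [hωσ]; exact hωψ)
          have hu' : u' = r' := F.alpha_M_unique hM hσ hαu (by rw [hασ]; exact hα)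
          subst hu; subst hu'
          exact hsIle ⟨u', hr'I, huu'⟩
      refine ⟨key x ⟨i₀, hi₀⟩, φ, hφ, ⟨i₀, hi₀⟩, fun i => ?_⟩
      rw [F.lowerC_eq_of_compat hQc]
      exact key (φ i) (F.sol_through_star hφ rfl)
    · -- invariant part ⊆ Morse set
      rintro ⟨hxQ, φ, hφ, ⟨i₀, hi₀⟩, hval⟩
      have hvals : ∀ i, φ i ∈
          (F.InvPartIn Set.univ
            (Set.univ \ F.MorseSetIn Set.univ M ({r | ∃ s ∈ I, le r s} \ I))) \
          (F.InvPartIn Set.univ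
            (Set.univ \ F.MorseSetIn Set.univ M {r | ∃ s ∈ I, le r s})) :=
        fun i => F.lowerC_subset _ (hval i)
      obtain ⟨r, r', hrr', hα, hω⟩ := hM.2.2.2.1 φ hφ
      have hrIle : r ∈ {r | ∃ s ∈ I, le r s} := by
        by_contra hc
        exact hxQ.2 ((F.mem_Q_iff hM hJle x).2 ⟨φ, r, hφ, ⟨i₀, hi₀⟩, hω, hc⟩)
      have hrI : r ∈ I := by
        by_contra hc
        obtain ⟨z, hz⟩ := F.omega_nonempty hφ
        exact hnotlt r z (hω hz) (F.omega_subset_of_compat hQc hvals hz) ⟨hrIle, hc⟩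
      have hr'I : r' ∈ I := by
        obtain ⟨z', hz'⟩ := F.alpha_nonempty hφ
        have hz'Q := F.alpha_subset_of_compat hQc hvals hz'
        have hz'M : z' ∈ M r' := hα hz'
        have hr'Ile : r' ∈ {r | ∃ s ∈ I, le r s} := by
          obtain ⟨σ₀, hσ₀, ⟨m, hm⟩, hασ₀, hωσ₀⟩ := F.M_sol hM r' hz'M
          by_contra hc
          exact hz'Q.2 ((F.mem_Q_iff hM hJle z').2 ⟨σ₀, r', hσ₀, ⟨m, hm⟩, hωσ₀, hc⟩)
        by_contra hc
        exact hnotlt r' z' hz'M hz'Q ⟨hr'Ile, hc⟩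
      simp only [MVField.MorseSetIn, Set.mem_iUnion]
      exact ⟨r, hrI, r', hr'I, φ, hφ, ⟨i₀, hi₀⟩, hα, hω⟩
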